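/- Suppose the graded ring R = ℚ[x_1,...,x_h]/⟨x_i ∏_{j=1}^{n_i}(∑_{k<i} a^i_{jk}x_k + x_i)⟩ is isomorphic as a graded ℚ-algebra to ℚ[y_1,...,y_h]/⟨y_i^{n_i+1}⟩. Then there exist nonzero integer vectors z_1,...,z_h in the lattice spanned by x_1,...,x_h, linearly independent, such that z_i^{n_i+1} = 0 but z_i^{n_i} ≠ 0 in R for each i. -/

import Mathlib

open MvPolynomial

/-- The defining ideal of the rational cohomology ring of a generalized Bott manifold. -/
noncomputable def genBottIdeal (h : ℕ) (n : Fin h → ℕ)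
    (a : (i : Fin h) → Fin (n i) → Fin h → ℤ) :
    Ideal (MvPolynomial (Fin h) ℚ) :=
  Ideal.span (Set.range fun i : Fin h =>
    X i * ∏ j : Fin (n i), ((∑ k : Fin h, C ((a i j k : ℚ)) * X k) + X i))

/-- The ideal `⟨y_i^{n_i+1}⟩` presenting `H^*(∏ ℂP^{n_i}; ℚ)`. -/
noncomputable def prodProjIdeal (h : ℕ) (n : Fin h → ℕ) :
    Ideal (MvPolynomial (Fin h) ℚ) :=
  Ideal.span (Set.range fun i : Fin h => (X i : MvPolynomial (Fin h) ℚ) ^ (n i + 1))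

section Aux

open TrivSqZeroExt

/-- The square-zero evaluation of polynomials. -/
noncomputable def psiA (h : ℕ) : MvPolynomial (Fin h) ℚ →ₐ[ℚ] TrivSqZeroExt ℚ (Fin h → ℚ) :=
  aeval fun i => inr (Pi.single i 1)

lemma tsze_mul_eq_zero {h : ℕ} (x y : TrivSqZeroExt ℚ (Fin h → ℚ))
    (hx : x.fst = 0) (hy : y.fst = 0) : x * y = 0 := by
  rw [← inl_fst_add_inr_snd_eq x, ← inl_fst_add_inr_snd_eq y, hx, hy]
  simp

lemma fst_psiA_X {h : ℕ} (k : Fin h) : (psiA h (X k)).fst = 0 := by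
  simp [psiA]

lemma genBott_le_ker (h : ℕ) (n : Fin h → ℕ) (hn : ∀ i, 1 ≤ n i)
    (a : (i : Fin h) → Fin (n i) → Fin h → ℤ) :
    ∀ p ∈ genBottIdeal h n a, psiA h p = 0 := by
  have hspan : genBottIdeal h n a ≤ RingHom.ker (psiA h).toRingHom := by
    rw [genBottIdeal, Ideal.span_le]
    rintro _ ⟨i, rfl⟩
    simp only [SetLike.mem_coe, RingHom.mem_ker, AlgHom.toRingHom_eq_coe, RingHom.coe_coe,
      map_mul]
    apply tsze_mul_eq_zero
    · exact fst_psiA_X i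
    · have : (psiA h (∏ j : Fin (n i), ((∑ k : Fin h, C ((a i j k : ℚ)) * X k) + X i))).fst
          = ∏ j : Fin (n i),
            (psiA h ((∑ k : Fin h, C ((a i j k : ℚ)) * X k) + X i)).fst := by
        rw [map_prod]
        exact map_prod (fstHom ℚ ℚ (Fin h → ℚ)) _ _
      rw [this]
      apply Finset.prod_eq_zero (Finset.mem_univ (⟨0, hn i⟩ : Fin (n i)))
      simp [psiA, fst_sum, fst_mul, fst_inr]
  intro p hp
  exact hspan hp

lemma prodProj_le_ker (h : ℕ) (n : Fin h → ℕ) (hn : ∀ i, 1 ≤ n i) :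
    ∀ p ∈ prodProjIdeal h n, psiA h p = 0 := by
  have hspan : prodProjIdeal h n ≤ RingHom.ker (psiA h).toRingHom := by
    rw [prodProjIdeal, Ideal.span_le]
    rintro _ ⟨i, rfl⟩
    simp only [SetLike.mem_coe, RingHom.mem_ker, AlgHom.toRingHom_eq_coe, RingHom.coe_coe]
    rw [pow_succ, map_mul]
    apply tsze_mul_eq_zero
    · have : (psiA h (X i ^ n i)).fst = ((psiA h (X i)).fst) ^ (n i) := by
        rw [map_pow]
        exact map_pow (fstHom ℚ ℚ (Fin h → ℚ)) _ _
      rw [this, fst_psiA_X]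
      exact zero_pow (Nat.one_le_iff_ne_zero.mp (hn i))
    · exact fst_psiA_X i
  intro p hp
  exact hspan hp

lemma psiA_sum {h : ℕ} (c : Fin h → ℚ) :
    ∑ j, c j • (inr (Pi.single j 1) : TrivSqZeroExt ℚ (Fin h → ℚ)) = inr c := by
  have : ∀ j : Fin h, c j • (inr (Pi.single j 1) : TrivSqZeroExt ℚ (Fin h → ℚ))
      = inr (Pi.single j (c j)) := by
    intro j
    rw [← inr_smul, ← Pi.single_smul, smul_eq_mul, mul_one]
  simp_rw [this, ← inr_sum, Finset.univ_sum_single]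

/-- mk of a linear polynomial is the linear combination of the `mk (X j)`. -/
lemma mk_linear_eq {h : ℕ} (I : Ideal (MvPolynomial (Fin h) ℚ)) (c : Fin h → ℚ) :
    Ideal.Quotient.mk I (∑ j, C (c j) * X j)
      = Fintype.linearCombination ℚ (fun i => Ideal.Quotient.mk I (X i)) c := by
  rw [Fintype.linearCombination_apply, map_sum]
  refine Finset.sum_congr rfl fun j _ => ?_
  rw [C_mul', ← Ideal.Quotient.mkₐ_eq_mk (R₁ := ℚ), map_smul]

lemma lincomb_inj {h : ℕ} (I : Ideal (MvPolynomial (Fin h) ℚ))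
    (hI : ∀ p ∈ I, psiA h p = 0) :
    Function.Injective
      (Fintype.linearCombination ℚ (fun i => Ideal.Quotient.mk I (X i))) := by
  set ψbar := Ideal.Quotient.liftₐ I (psiA h) hI with hψ
  have hcomp : ∀ c : Fin h → ℚ,
      ψbar (Fintype.linearCombination ℚ (fun i => Ideal.Quotient.mk I (X i)) c)
        = inr c := by
    intro c
    rw [← mk_linear_eq]
    have : ψbar (Ideal.Quotient.mk I (∑ j, C (c j) * X j))
        = psiA h (∑ j, C (c j) * X j) := by
      rw [hψ, Ideal.Quotient.liftₐ_apply]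
      rfl
    rw [this]
    simp only [psiA, map_sum, map_mul, aeval_X, aeval_C]
    calc ∑ j, (algebraMap ℚ _) (c j) * inr (Pi.single j 1)
        = ∑ j, c j • (inr (Pi.single j 1) : TrivSqZeroExt ℚ (Fin h → ℚ)) := by
          refine Finset.sum_congr rfl fun j _ => ?_
          rw [show (algebraMap ℚ (TrivSqZeroExt ℚ (Fin h → ℚ))) (c j) = inl (c j) by
            rw [algebraMap_eq_inl], inl_mul_inr, ← inr_smul]
      _ = inr c := psiA_sum c
  intro c d hcd
  have := congrArg ψbar hcd
  rw [hcomp, hcomp] at this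
  exact inr_injective this

/-- The class of `X i ^ (n i)` is nonzero in the truncated polynomial ring. -/
lemma prodProj_pow_ne_zero (h : ℕ) (n : Fin h → ℕ) (i : Fin h) :
    (Ideal.Quotient.mk (prodProjIdeal h n) (X i)) ^ (n i) ≠ 0 := by
  classical
  set J : Ideal (Polynomial ℚ) := Ideal.span {Polynomial.X ^ (n i + 1)} with hJ
  let χ : MvPolynomial (Fin h) ℚ →ₐ[ℚ] Polynomial ℚ ⧸ J :=
    aeval fun j => if j = i then Ideal.Quotient.mk J Polynomial.X else 0
  have hker : ∀ p ∈ prodProjIdeal h n, χ p = 0 := by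
    have hspan : prodProjIdeal h n ≤ RingHom.ker χ.toRingHom := by
      rw [prodProjIdeal, Ideal.span_le]
      rintro _ ⟨j, rfl⟩
      simp only [SetLike.mem_coe, RingHom.mem_ker, AlgHom.toRingHom_eq_coe, RingHom.coe_coe,
        map_pow, aeval_X, χ]
      by_cases hj : j = i
      · subst hj
        rw [if_pos rfl, ← map_pow, Ideal.Quotient.eq_zero_iff_mem, hJ]
        exact Ideal.subset_span rfl
      · rw [if_neg hj, zero_pow (Nat.succ_ne_zero _)]
    exact fun p hp => hspan hp
  intro hzero
  have h2 : Ideal.Quotient.liftₐ (prodProjIdeal h n) χ hker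
      ((Ideal.Quotient.mk (prodProjIdeal h n) (X i)) ^ (n i)) = 0 := by
    rw [hzero, map_zero]
  rw [Ideal.Quotient.liftₐ_apply, map_pow] at h2
  change ((↑χ : MvPolynomial (Fin h) ℚ →+* Polynomial ℚ ⧸ J) (X i)) ^ (n i) = 0 at h2
  have h4 : (↑χ : MvPolynomial (Fin h) ℚ →+* Polynomial ℚ ⧸ J) (X i)
      = Ideal.Quotient.mk J Polynomial.X := by
    simp [χ]
  rw [h4, ← map_pow, Ideal.Quotient.eq_zero_iff_mem, hJ, Ideal.mem_span_singleton] at h2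
  have := Polynomial.natDegree_le_of_dvd h2 (pow_ne_zero _ Polynomial.X_ne_zero)
  rw [Polynomial.natDegree_pow, Polynomial.natDegree_pow, Polynomial.natDegree_X] at this
  omega

end Aux

/-- Lemma 3: if the cohomology ring of the generalized Bott manifold is isomorphic, as a
graded `ℚ`-algebra, to `ℚ[y_1,…,y_h]/⟨y_i^{n_i+1}⟩`, then there are linearly independent
nonzero integer vectors `z_1,…,z_h` in the lattice spanned by `x_1,…,x_h` with
`z_i^{n_i+1} = 0` and `z_i^{n_i} ≠ 0`. -/
theorem stmt_12 (h : ℕ) (n : Fin h → ℕ) (hn : ∀ i, 1 ≤ n i)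
    (a : (i : Fin h) → Fin (n i) → Fin h → ℤ)
    (ha : ∀ i j k, ¬ k < i → a i j k = 0)
    (hiso : ∃ φ : (MvPolynomial (Fin h) ℚ ⧸ genBottIdeal h n a) ≃ₐ[ℚ]
        (MvPolynomial (Fin h) ℚ ⧸ prodProjIdeal h n),
      ∀ i : Fin h,
        φ (Ideal.Quotient.mk (genBottIdeal h n a) (X i)) ∈
          Submodule.span ℚ
            (Set.range fun j : Fin h =>
              Ideal.Quotient.mk (prodProjIdeal h n) (X j))) :
    ∃ z : Fin h → Fin h → ℤ,
      (∀ i, z i ≠ 0) ∧ LinearIndependent ℤ z ∧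
      ∀ i : Fin h,
        (Ideal.Quotient.mk (genBottIdeal h n a)
            (∑ j, C ((z i j : ℚ)) * X j)) ^ (n i + 1) = 0 ∧
        (Ideal.Quotient.mk (genBottIdeal h n a)
            (∑ j, C ((z i j : ℚ)) * X j)) ^ (n i) ≠ 0 := by
  classical
  obtain ⟨φ, hφ⟩ := hiso
  set xR : Fin h → (MvPolynomial (Fin h) ℚ ⧸ genBottIdeal h n a) :=
    fun i => Ideal.Quotient.mk (genBottIdeal h n a) (X i) with hxR
  set yS : Fin h → (MvPolynomial (Fin h) ℚ ⧸ prodProjIdeal h n) :=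
    fun i => Ideal.Quotient.mk (prodProjIdeal h n) (X i) with hyS
  set fR := Fintype.linearCombination ℚ xR with hfRdef
  set fS := Fintype.linearCombination ℚ yS with hfSdef
  have hfR : Function.Injective fR := lincomb_inj _ (genBott_le_ker h n hn a)
  have hfS : Function.Injective fS := lincomb_inj _ (prodProj_le_ker h n hn)
  have hrange : LinearMap.range fS = Submodule.span ℚ (Set.range yS) :=
    Fintype.range_linearCombination ℚ yS
  have hmem : ∀ c : Fin h → ℚ, (φ.toLinearMap ∘ₗ fR) c ∈ LinearMap.range fS := by
    intro c
    rw [hrange]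
    have : (φ.toLinearMap ∘ₗ fR) c = ∑ j, c j • φ (xR j) := by
      simp only [LinearMap.comp_apply, hfRdef, Fintype.linearCombination_apply, map_sum,
        map_smul]
      rfl
    rw [this]
    exact Submodule.sum_mem _ fun j _ => Submodule.smul_mem _ _ (hφ j)
  set e := LinearEquiv.ofInjective fS hfS with hedef
  set Mlin : (Fin h → ℚ) →ₗ[ℚ] (Fin h → ℚ) :=
    e.symm.toLinearMap ∘ₗ
      LinearMap.codRestrict (LinearMap.range fS) (φ.toLinearMap ∘ₗ fR) hmem with hMdef
  have key : ∀ y : LinearMap.range fS, fS (e.symm y) = y := by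
    intro y
    conv_rhs => rw [← e.apply_symm_apply y]
    rw [hedef, LinearEquiv.ofInjective_apply]
  have hMlin : ∀ c, fS (Mlin c) = φ (fR c) := by
    intro c
    have := key (LinearMap.codRestrict (LinearMap.range fS) (φ.toLinearMap ∘ₗ fR) hmem c)
    simpa [hMdef, LinearMap.codRestrict_apply] using this
  have hMinj : Function.Injective Mlin := by
    intro c d hcd
    apply hfR
    apply φ.injective
    rw [← hMlin, ← hMlin, hcd]
  have hMsurj : Function.Surjective Mlin := LinearMap.injective_iff_surjective.mp hMinj
  set Meq := LinearEquiv.ofBijective Mlin ⟨hMinj, hMsurj⟩ with hMeqd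
  set q : Fin h → (Fin h → ℚ) := fun i => Meq.symm (Pi.single i 1) with hqdef
  have hsumsingle : ∀ g : Fin h → ℚ,
      ∑ i, g i • (Pi.single i (1 : ℚ) : Fin h → ℚ) = g := by
    intro g
    have : ∀ i : Fin h, g i • (Pi.single i (1:ℚ) : Fin h → ℚ) = Pi.single i (g i) := by
      intro i; rw [← Pi.single_smul, smul_eq_mul, mul_one]
    simp_rw [this, Finset.univ_sum_single]
  have hMq : ∀ i, Mlin (q i) = Pi.single i 1 := by
    intro i
    have : Meq (q i) = Pi.single i 1 := by rw [hqdef, Meq.apply_symm_apply]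
    exact this
  have hqli : LinearIndependent ℚ q := by
    rw [Fintype.linearIndependent_iff]
    intro g hg j
    have h0 : Mlin (∑ i, g i • q i) = 0 := by rw [hg, map_zero]
    rw [map_sum] at h0
    simp_rw [map_smul, hMq] at h0
    rw [hsumsingle g] at h0
    exact congrFun h0 j
  have hqne : ∀ i, q i ≠ 0 := by
    intro i hq0
    have := hMq i
    rw [hq0, map_zero] at this
    have := congrFun this i
    simp at this
  -- w i = preimage of y i
  set w : Fin h → (MvPolynomial (Fin h) ℚ ⧸ genBottIdeal h n a) := fun i => fR (q i) with hwdef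
  have hw : ∀ i, φ (w i) = yS i := by
    intro i
    rw [hwdef, ← hMlin, hMq]
    rw [hfSdef]
    rw [Fintype.linearCombination_apply_single, one_smul]
  have hyzero : ∀ i, (yS i) ^ (n i + 1) = 0 := by
    intro i
    rw [hyS, ← map_pow, Ideal.Quotient.eq_zero_iff_mem, prodProjIdeal]
    exact Ideal.subset_span ⟨i, rfl⟩
  have hwzero : ∀ i, (w i) ^ (n i + 1) = 0 := by
    intro i
    apply φ.injective
    rw [map_pow, hw, hyzero, map_zero]
  have hwne : ∀ i, (w i) ^ (n i) ≠ 0 := by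
    intro i hcon
    apply prodProj_pow_ne_zero h n i
    have : φ ((w i) ^ (n i)) = 0 := by rw [hcon, map_zero]
    rw [map_pow, hw] at this
    exact this
  -- clear denominators
  obtain ⟨b, hb⟩ := IsLocalization.exist_integer_multiples_of_finite
    (nonZeroDivisors ℤ) (S := ℚ) (fun p : Fin h × Fin h => q p.1 p.2)
  have hb' : ∀ p : Fin h × Fin h, ∃ m : ℤ, (m : ℚ) = ((b : ℤ) : ℚ) * q p.1 p.2 := by
    intro p
    obtain ⟨m, hm⟩ := hb p
    refine ⟨m, ?_⟩
    rw [show (algebraMap ℤ ℚ) m = (m : ℚ) from by simp] at hm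
    rw [hm, zsmul_eq_mul]
  choose zf hzf using hb'
  have hbne : ((b : ℤ) : ℚ) ≠ 0 := Int.cast_ne_zero.mpr (nonZeroDivisors.coe_ne_zero b)
  refine ⟨fun i j => zf (i, j), ?_, ?_, ?_⟩
  · intro i hz0
    obtain ⟨j, hj⟩ := Function.ne_iff.mp (hqne i)
    have hz00 : zf (i, j) = 0 := by simpa using congrFun hz0 j
    have : (zf (i, j) : ℚ) = 0 := by exact_mod_cast hz00
    rw [hzf (i, j)] at this
    exact (mul_ne_zero hbne (by simpa using hj)) this
  · -- linear independence over ℤ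
    have hv : LinearIndependent ℚ (fun i => fun j => ((zf (i, j) : ℤ) : ℚ)) := by
      have h1 := hqli.units_smul (fun _ => Units.mk0 (((b : ℤ) : ℚ)) hbne)
      convert h1 using 1
      funext i j
      rw [hzf (i, j)]
      simp [Units.smul_def]
    have hv' : LinearIndependent ℤ (fun i => fun j => ((zf (i, j) : ℤ) : ℚ)) := by
      apply hv.restrict_scalars
      intro x y hxy
      simpa using hxy
    let Φ : (Fin h → ℤ) →ₗ[ℤ] (Fin h → ℚ) :=
      { toFun := fun c j => (c j : ℚ)
        map_add' := fun c d => by funext j; simp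
        map_smul' := fun m c => by funext j; simp }
    exact LinearIndependent.of_comp Φ hv'
  · intro i
    have hmk : Ideal.Quotient.mk (genBottIdeal h n a) (∑ j, C ((zf (i, j) : ℚ)) * X j)
        = (((b : ℤ) : ℚ)) • w i := by
      rw [mk_linear_eq]
      have : (fun j => ((zf (i, j) : ℤ) : ℚ)) = (((b : ℤ) : ℚ)) • q i := by
        funext j
        rw [hzf (i, j)]
        simp
      rw [show Fintype.linearCombination ℚ xR = fR from rfl, this, map_smul, hwdef]
    have hmk' : Ideal.Quotient.mk (genBottIdeal h n a) (∑ j, C ((zf (i, j) : ℚ)) * X j)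
        = algebraMap ℚ _ (((b : ℤ) : ℚ)) * w i := by
      rw [hmk]
      exact Algebra.smul_def (R := ℚ)
        (A := MvPolynomial (Fin h) ℚ ⧸ genBottIdeal h n a) ((b : ℤ) : ℚ) (w i)
    have hbpow : ∀ m : ℕ, (((b : ℤ) : ℚ)) ^ m ≠ 0 := fun m => pow_ne_zero m hbne
    constructor
    · rw [hmk', mul_pow, ← map_pow, hwzero, mul_zero]
    · rw [hmk', mul_pow, ← map_pow]
      intro hcon
      apply hwne i
      have h5 : algebraMap ℚ _ (((((b : ℤ) : ℚ)) ^ (n i))⁻¹) *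
          (algebraMap ℚ _ ((((b : ℤ) : ℚ)) ^ (n i)) * (w i) ^ (n i)) = 0 := by
        rw [hcon, mul_zero]
      rw [← mul_assoc, ← map_mul, inv_mul_cancel₀ (hbpow (n i)), map_one, one_mul] at h5
      exact h5
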